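/- Let 𝒳 be a non-trivial well-pointed coherent category in which the unique morphism X → 1 is a retraction for every X ≇ 0. If 𝒳 is filtral, then for every object X of 𝒳 the space Spec X is a compact Hausdorff space. -/

import Mathlib

open CategoryTheory CategoryTheory.Limits Opposite

universe w' w v u

namespace Paper

variable {C : Type u} [Category.{v} C]

/-- "X ≇ 0": the object `X` is not initial. -/
def NonInitial (X : C) : Prop := IsInitial X → False

/-- The category is non-trivial: `0 ≇ 1`, i.e. no object is both initial and terminal. -/
def NonTrivialCat (C : Type u) [Category.{v} C] : Prop :=
  ∀ X : C, IsInitial X → IsTerminal X → False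

section Terminal
variable (C) [HasTerminal C]

/-- The category is well-pointed: the functor of points `pt = Hom(1, -)` is faithful. -/
def WellPointed : Prop :=
  ∀ ⦃X Y : C⦄ (f g : X ⟶ Y), (∀ p : ⊤_ C ⟶ X, p ≫ f = p ≫ g) → f = g

/-- The unique morphism `X ⟶ 1` is a retraction for every `X ≇ 0`. -/
def EnoughPoints : Prop :=
  ∀ X : C, NonInitial X → Nonempty (SplitEpi (terminal.from X))

end Terminal

/-- `b` is the bottom element of `Sub(X)`. -/
def IsBotIn {X : C} (b : Subobject X) : Prop := ∀ S : Subobject X, b ≤ S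

/-- `S` is an atom of the subobject lattice `Sub(X)`. -/
def IsAtomIn {X : C} (S : Subobject X) : Prop :=
  ¬ IsBotIn S ∧ ∀ T : Subobject X, T < S → IsBotIn T

/-- `Sub(X)` is atomic: every subobject is the supremum of the atoms below it. -/
def AtomicSubobjects (X : C) : Prop :=
  ∀ S : Subobject X, IsLUB {A : Subobject X | IsAtomIn A ∧ A ≤ S} S

/-- `S` is a complemented subobject: it has a complement `T` with `S ⊓ T = ⊥`, `S ⊔ T = ⊤`. -/
def IsComplementedSub {X : C} (S : Subobject X) : Prop :=
  ∃ T m : Subobject X, IsGLB {S, T} m ∧ IsBotIn m ∧ IsLUB {S, T} ⊤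

/-- A (non-empty) filter of the Boolean center `B(X)` of `Sub(X)`. -/
structure CenterFilter (X : C) where
  carrier : Set (Subobject X)
  mem_complemented : ∀ S ∈ carrier, IsComplementedSub S
  nonempty : carrier.Nonempty
  inf_mem : ∀ S ∈ carrier, ∀ T ∈ carrier, ∀ m : Subobject X, IsGLB {S, T} m → m ∈ carrier
  mem_of_le : ∀ S ∈ carrier, ∀ T : Subobject X, IsComplementedSub T → S ≤ T → T ∈ carrier

theorem CenterFilter.ext' {X : C} {F G : CenterFilter X} (h : F.carrier = G.carrier) : F = G := by
  cases F; cases G; cases h; rfl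

/-- Filters of the Boolean center, ordered by reverse inclusion. -/
instance (X : C) : PartialOrder (CenterFilter X) where
  le F G := G.carrier ⊆ F.carrier
  le_refl _ := subset_rfl
  le_trans _ _ _ h1 h2 := fun _ hx => h1 (h2 hx)
  le_antisymm _ _ h1 h2 := CenterFilter.ext' (Set.Subset.antisymm h2 h1)

/-- An object `X` is filtral if `Sub(X)` is isomorphic, as a lattice, to the lattice of
non-empty filters of the Boolean center of `Sub(X)`. -/
def FiltralObject (X : C) : Prop :=
  Nonempty (Subobject X ≃o CenterFilter X)

/-- A category is filtral if every object is covered by a filtral one. -/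
def Filtral (C : Type u) [Category.{v} C] : Prop :=
  ∀ Y : C, ∃ (X : C) (f : X ⟶ Y), Nonempty (RegularEpi f) ∧ FiltralObject X

/-- `Sub(X)` is a complete lattice (every subset has an infimum). -/
def MonoCompleteAt (X : C) : Prop :=
  ∀ s : Set (Subobject X), ∃ m : Subobject X, IsGLB s m

/-- The category is mono-complete: every subobject poset is a complete lattice. -/
def MonoComplete (C : Type u) [Category.{v} C] : Prop := ∀ X : C, MonoCompleteAt X

section Points
variable [HasTerminal C]

/-- `Vs S` is the set of points of `X` factoring through the subobject `S`. -/
def Vs {X : C} (S : Subobject X) : Set (⊤_ C ⟶ X) := {p | S.Factors p}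

open Classical in
/-- `Cg T` is the smallest subobject of `X` through which every point in `T` factors
(defined whenever the relevant infimum exists). -/
noncomputable def Cg {X : C} (T : Set (⊤_ C ⟶ X)) : Subobject X :=
  if h : ∃ m : Subobject X, IsGLB {S : Subobject X | ∀ p ∈ T, S.Factors p} m
  then h.choose else ⊤

/-- The closure operator `cl = Vs ∘ Cg` on the power set of `pt X`. -/
noncomputable def cl {X : C} (T : Set (⊤_ C ⟶ X)) : Set (⊤_ C ⟶ X) := Vs (Cg T)

end Points

/-- Images are stable under pullback (together with finite limits and images, this is
the definition of a regular category). -/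
class StableImages (C : Type u) [Category.{v} C] [HasFiniteLimits C] [HasImages C] : Prop where
  image_pullback : ∀ {X Y Z : C} (f : X ⟶ Y) (g : Z ⟶ Y),
    (Subobject.pullback g).obj (imageSubobject f) = imageSubobject (pullback.snd f g)

/-- The extra structure of a coherent category: each `Sub(X)` has finite joins and these
are preserved by the pullback functors. -/
class CoherentJoins (C : Type u) [Category.{v} C] [HasPullbacks C] : Prop where
  exists_bot : ∀ X : C, ∃ b : Subobject X, IsBotIn b
  exists_sup : ∀ {X : C} (S T : Subobject X), ∃ U : Subobject X, IsLUB {S, T} U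
  pullback_bot : ∀ {X Y : C} (f : X ⟶ Y) (b : Subobject Y),
    IsBotIn b → IsBotIn ((Subobject.pullback f).obj b)
  pullback_sup : ∀ {X Y : C} (f : X ⟶ Y) (S T U : Subobject Y), IsLUB {S, T} U →
    IsLUB {(Subobject.pullback f).obj S, (Subobject.pullback f).obj T}
      ((Subobject.pullback f).obj U)

/-- An internal equivalence relation: a jointly-monic pair which is reflexive, symmetric and
transitive (expressed via generalised elements). -/
structure IsEquivRelPair {R X : C} (r₁ r₂ : R ⟶ X) : Prop where
  jointlyMono : ∀ {Z : C} (a b : Z ⟶ R), a ≫ r₁ = b ≫ r₁ → a ≫ r₂ = b ≫ r₂ → a = b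
  refl : ∀ {Z : C} (a : Z ⟶ X), ∃ h : Z ⟶ R, h ≫ r₁ = a ∧ h ≫ r₂ = a
  symm : ∀ {Z : C} (a b : Z ⟶ X), (∃ h : Z ⟶ R, h ≫ r₁ = a ∧ h ≫ r₂ = b) →
    ∃ h : Z ⟶ R, h ≫ r₁ = b ∧ h ≫ r₂ = a
  trans : ∀ {Z : C} (a b c : Z ⟶ X), (∃ h : Z ⟶ R, h ≫ r₁ = a ∧ h ≫ r₂ = b) →
    (∃ h : Z ⟶ R, h ≫ r₁ = b ∧ h ≫ r₂ = c) →
    ∃ h : Z ⟶ R, h ≫ r₁ = a ∧ h ≫ r₂ = c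

/-- Every internal equivalence relation is effective: it is the kernel pair of its
coequaliser. -/
def EffectiveEquivRels (C : Type u) [Category.{v} C] : Prop :=
  ∀ {R X : C} (r₁ r₂ : R ⟶ X), IsEquivRelPair r₁ r₂ →
    ∃ (Y : C) (q : X ⟶ Y) (w : r₁ ≫ q = r₂ ≫ q),
      Nonempty (IsColimit (Cofork.ofπ q w)) ∧ Nonempty (IsLimit (PullbackCone.mk r₁ r₂ w))

/-- An object is decidable if its diagonal is a complemented subobject of `X ⨯ X`. -/
def DecidableObj [HasBinaryProducts C] (X : C) : Prop :=
  ∃ (Y : C) (g : Y ⟶ X ⨯ X), Nonempty (IsColimit (BinaryCofan.mk (diag X) g))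

/-- An object is pro-decidable if it is a codirected (cofiltered) limit of decidable objects. -/
def ProDecidableObj [HasBinaryProducts C] (X : C) : Prop :=
  ∃ (J : Type v) (_ : SmallCategory J) (_ : IsCofiltered J) (D : J ⥤ C) (c : Cone D),
    (∀ j, DecidableObj (D.obj j)) ∧ Nonempty (IsLimit c) ∧ Nonempty (c.pt ≅ X)


section Aux

lemma to1_eq {A : C} [HasTerminal C] (f g : A ⟶ ⊤_ C) : f = g :=
  terminalIsTerminal.hom_ext f g

instance point_mono {X : C} [HasTerminal C] (p : ⊤_ C ⟶ X) : Mono p :=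
  ⟨fun f g _ => to1_eq f g⟩

lemma le_iff_factors_arrow {X : C} {S T : Subobject X} : S ≤ T ↔ T.Factors S.arrow :=
  ⟨fun h => (Subobject.factors_iff _ _).mpr ⟨Subobject.ofLE _ _ h, Subobject.ofLE_arrow h⟩,
   fun h => Subobject.le_of_comm (T.factorThru _ h) (T.factorThru_arrow _ h)⟩

lemma mk_factors_iff_exists {X A : C} (f : A ⟶ X) [Mono f] (g : B ⟶ X) :
    (Subobject.mk f).Factors g ↔ ∃ k, k ≫ f = g := by
  rw [Subobject.mk_factors_iff]; exact Iff.rfl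

lemma factors_point_iff_le {X : C} [HasTerminal C] {p : ⊤_ C ⟶ X} {S : Subobject X} :
    S.Factors p ↔ Subobject.mk p ≤ S := by
  constructor
  · intro h
    exact Subobject.mk_le_of_comm (S.factorThru p h) (S.factorThru_arrow p h)
  · intro h
    have h2 : S.Factors ((Subobject.mk p).arrow) := le_iff_factors_arrow.mp h
    have h3 := Subobject.factors_of_factors_right ((Subobject.underlyingIso p).inv) h2
    rwa [Subobject.underlyingIso_arrow] at h3

lemma initial_dom_bot {X : C} {S : Subobject X} (h : IsInitial (S : C)) : IsBotIn S :=
  fun T => Subobject.le_of_comm (h.to (T : C)) (h.hom_ext _ _)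

lemma pullback_obj_mk [HasPullbacks C] {X Y A : C} (f : Y ⟶ X) (g : A ⟶ X) [Mono g] :
    (Subobject.pullback f).obj (Subobject.mk g) = Subobject.mk (pullback.snd g f) := by
  apply Quotient.sound'
  apply CategoryTheory.ThinSkeleton.equiv_of_both_ways
  · exact MonoOver.homMk (𝟙 _) (by simp)
  · exact MonoOver.homMk (𝟙 _) (by simp)

lemma factors_pullback_iff [HasPullbacks C] {X Y W : C} (f : Y ⟶ X) (S : Subobject X)
    (u : W ⟶ Y) : ((Subobject.pullback f).obj S).Factors u ↔ S.Factors (u ≫ f) := by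
  induction S using Subobject.ind with
  | h g =>
    rw [pullback_obj_mk, mk_factors_iff_exists, mk_factors_iff_exists]
    constructor
    · rintro ⟨k, rfl⟩
      exact ⟨k ≫ pullback.fst g f, by rw [Category.assoc, Category.assoc, pullback.condition]⟩
    · rintro ⟨k, hk⟩
      exact ⟨pullback.lift k u hk, pullback.lift_snd _ _ _⟩

end Aux
set_option linter.unusedSectionVars false

section Core
variable [HasFiniteLimits C] [CoherentJoins C]

/-- If `⊤` is a bottom element of `Sub(1)`, the category is trivial: contradiction. -/
lemma false_of_top_bot (hnt : NonTrivialCat C)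
    (h : IsBotIn (⊤ : Subobject (⊤_ C))) : False := by
  -- every subobject lattice has `⊤` as bottom
  have hbotW : ∀ (W : C) (S : Subobject W), (⊤ : Subobject W) ≤ S := by
    intro W S
    have h1 := CoherentJoins.pullback_bot (terminal.from W) _ h
    rw [Subobject.pullback_top] at h1
    exact h1 S
  -- every mono splits
  have hsec : ∀ {A W : C} (m : A ⟶ W), Mono m → ∃ s : W ⟶ A, s ≫ m = 𝟙 W := by
    intro A W m hm
    have h1 : (Subobject.mk m).Factors (𝟙 W) := by
      apply Subobject.factors_of_le _ (hbotW W (Subobject.mk m))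
      exact Subobject.top_factors _
    obtain ⟨k, hk⟩ := (mk_factors_iff_exists m (𝟙 W)).mp h1
    exact ⟨k, hk⟩
  -- all hom-sets are subsingletons
  have hss : ∀ {Z W : C} (f g : Z ⟶ W), f = g := by
    intro Z W f g
    obtain ⟨s, hs⟩ := hsec (equalizer.ι f g) inferInstance
    calc f = (s ≫ equalizer.ι f g) ≫ f := by rw [hs, Category.id_comp]
    _ = (s ≫ equalizer.ι f g) ≫ g := by
        rw [Category.assoc, Category.assoc, equalizer.condition]
    _ = g := by rw [hs, Category.id_comp]
  have hmono : ∀ {Z W : C} (f : Z ⟶ W), Mono f := fun f => ⟨fun _ _ _ => hss _ _⟩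
  -- the bottom subobject of `1`
  obtain ⟨b1, hb1⟩ := CoherentJoins.exists_bot (⊤_ C)
  have hfac : b1.Factors (𝟙 (⊤_ C)) := by
    apply Subobject.factors_of_le _ (hbotW _ b1)
    exact Subobject.top_factors _
  set s1 : ⊤_ C ⟶ (b1 : C) := b1.factorThru _ hfac with hs1
  have hs1c : s1 ≫ b1.arrow = 𝟙 _ := b1.factorThru_arrow _ hfac
  -- `(b1 : C)` is initial
  have hinit : IsInitial (b1 : C) := by
    apply IsInitial.ofUniqueHom (fun W => by
      have : Mono (terminal.from W) := hmono _
      exact Subobject.ofLEMk b1 (terminal.from W) (hb1 _))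
    intro W m
    exact hss _ _
  have hterm : IsTerminal (b1 : C) :=
    IsTerminal.ofUniqueHom (fun W => terminal.from W ≫ s1) (fun W m => hss _ _)
  exact hnt _ hinit hterm

/-- No point factors through a bottom subobject. -/
lemma no_point_through_bot (hnt : NonTrivialCat C) {X : C} {b : Subobject X}
    (hb : IsBotIn b) {p : ⊤_ C ⟶ X} (hf : b.Factors p) : False := by
  apply false_of_top_bot hnt
  have h1 : IsBotIn ((Subobject.pullback p).obj b) := CoherentJoins.pullback_bot p b hb
  have h2 : (⊤ : Subobject (⊤_ C)) ≤ (Subobject.pullback p).obj b := by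
    have h3 : Subobject.mk p ≤ b := factors_point_iff_le.mp hf
    have h4 := (Subobject.pullback p).monotone h3
    rwa [Subobject.pullback_self] at h4
  exact fun S => le_trans h2 (h1 S)

/-- Every subobject that is not a bottom element has a point. -/
lemma nonbot_point (hpt : EnoughPoints C) {X : C} {S : Subobject X}
    (hS : ¬ IsBotIn S) : ∃ p : ⊤_ C ⟶ X, S.Factors p := by
  have hni : NonInitial (S : C) := fun hi => hS (initial_dom_bot hi)
  obtain ⟨se⟩ := hpt _ hni
  exact ⟨se.section_ ≫ S.arrow, (Subobject.factors_iff _ _).mpr ⟨se.section_, rfl⟩⟩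

/-- A point factoring through a least upper bound factors through one of the two parts. -/
lemma factors_of_factors_lub (hnt : NonTrivialCat C) (hpt : EnoughPoints C)
    {X : C} {S T U : Subobject X} (hlub : IsLUB {S, T} U)
    {p : ⊤_ C ⟶ X} (hp : U.Factors p) : S.Factors p ∨ T.Factors p := by
  set A := (Subobject.pullback p).obj S with hA
  set B := (Subobject.pullback p).obj T with hB
  have hAB : IsLUB {A, B} ((Subobject.pullback p).obj U) :=
    CoherentJoins.pullback_sup p S T U hlub
  have htop : (⊤ : Subobject (⊤_ C)) ≤ (Subobject.pullback p).obj U := by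
    have h3 : Subobject.mk p ≤ U := factors_point_iff_le.mp hp
    have h4 := (Subobject.pullback p).monotone h3
    rwa [Subobject.pullback_self] at h4
  -- a subobject of ⊤_C with non-initial domain is factored by the identity point
  have key : ∀ (R : Subobject X) (hR : ¬ NonInitial (((Subobject.pullback p).obj R : C))),
      IsBotIn ((Subobject.pullback p).obj R) := by
    intro R hR
    have : Nonempty (IsInitial (((Subobject.pullback p).obj R : C))) := by
      by_contra hne
      exact hR (fun i => hne ⟨i⟩)
    exact initial_dom_bot this.some
  have fact : ∀ (R : Subobject X), NonInitial (((Subobject.pullback p).obj R : C)) →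
      R.Factors p := by
    intro R hR
    obtain ⟨se⟩ := hpt _ hR
    have h1 : ((Subobject.pullback p).obj R).Factors (𝟙 (⊤_ C)) :=
      (Subobject.factors_iff _ _).mpr ⟨se.section_, to1_eq _ _⟩
    have h2 := (factors_pullback_iff p R (𝟙 _)).mp h1
    rwa [Category.id_comp] at h2
  by_cases hS1 : NonInitial ((A : C))
  · exact Or.inl (fact S hS1)
  by_cases hT1 : NonInitial ((B : C))
  · exact Or.inr (fact T hT1)
  exfalso
  have hAb : IsBotIn A := key S hS1
  have hBb : IsBotIn B := key T hT1
  apply false_of_top_bot hnt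
  intro R
  refine le_trans htop (hAB.2 ?_)
  rintro a (rfl | rfl)
  · exact hAb R
  · exact hBb R
end Core
section Boolean
variable [HasFiniteLimits C]

lemma botIn_of_le {X : C} {x y : Subobject X} (h : x ≤ y) (hy : IsBotIn y) : IsBotIn x :=
  fun T => le_trans h (hy T)

lemma botIn_lub {X : C} {x y z : Subobject X} (h : IsLUB {x, y} z) (hx : IsBotIn x)
    (hy : IsBotIn y) : IsBotIn z := fun T => h.2 (by rintro a (rfl | rfl); exacts [hx T, hy T])

lemma gc_map_pullback {A X : C} (m : A ⟶ X) [Mono m] :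
    GaloisConnection (fun S => (Subobject.map m).obj S)
      (fun S => (Subobject.pullback m).obj S) := by
  intro a b
  constructor
  · intro h
    have h1 : a ≤ (Subobject.pullback m).obj ((Subobject.map m).obj a) :=
      leOfHom ((Subobject.mapPullbackAdj m).unit.app a)
    exact le_trans h1 ((Subobject.pullback m).monotone h)
  · intro h
    have h1 : (Subobject.map m).obj ((Subobject.pullback m).obj b) ≤ b :=
      leOfHom ((Subobject.mapPullbackAdj m).counit.app b)
    exact le_trans ((Subobject.map m).monotone h) h1

variable [CoherentJoins C]

lemma isLUB_inf_of_isLUB {X : C} (x : Subobject X) {b c U : Subobject X}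
    (h : IsLUB {b, c} U) : IsLUB {x ⊓ b, x ⊓ c} (x ⊓ U) := by
  induction x using Subobject.ind with
  | h m =>
    rename_i A hm
    have key : ∀ y : Subobject X, Subobject.mk m ⊓ y =
        (Subobject.map m).obj ((Subobject.pullback m).obj y) := fun y =>
      Subobject.inf_eq_map_pullback' (MonoOver.mk m) y
    have hsub := CoherentJoins.pullback_sup m b c U h
    have himg := (gc_map_pullback m).isLUB_l_image hsub
    rw [Set.image_pair] at himg
    rw [key b, key c, key U]
    exact himg

lemma compl_top {X : C} : IsComplementedSub (⊤ : Subobject X) := by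
  obtain ⟨b, hb⟩ := CoherentJoins.exists_bot X
  refine ⟨b, b, ⟨?_, ?_⟩, hb, ⟨?_, ?_⟩⟩
  · rintro a (rfl | rfl); exacts [le_top, le_rfl]
  · intro x hx; exact hx (Set.mem_insert_of_mem _ rfl)
  · rintro a (rfl | rfl); exacts [le_rfl, le_top]
  · intro x hx; exact hx (Set.mem_insert _ _)

lemma compl_of_bot {X : C} {b : Subobject X} (hb : IsBotIn b) : IsComplementedSub b := by
  refine ⟨⊤, b, ⟨?_, ?_⟩, hb, ⟨?_, ?_⟩⟩
  · rintro a (rfl | rfl); exacts [le_rfl, le_top]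
  · intro x hx; exact hx (Set.mem_insert _ _)
  · rintro a (rfl | rfl); exacts [hb ⊤, le_rfl]
  · intro x hx; exact hx (Set.mem_insert_of_mem _ rfl)

lemma compl_inf {X : C} {a b : Subobject X} (ha : IsComplementedSub a)
    (hb : IsComplementedSub b) : IsComplementedSub (a ⊓ b) := by
  obtain ⟨a', ma, hga, hba, hla⟩ := ha
  obtain ⟨b', mb, hgb, hbb, hlb⟩ := hb
  obtain ⟨s, hs⟩ : ∃ s, IsLUB {a', b'} s := CoherentJoins.exists_sup a' b'
  have hma : ma = a ⊓ a' := hga.unique isGLB_pair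
  have hmb : mb = b ⊓ b' := hgb.unique isGLB_pair
  refine ⟨s, (a ⊓ b) ⊓ s, isGLB_pair, ?_, ?_⟩
  · have hd := isLUB_inf_of_isLUB (a ⊓ b) hs
    refine botIn_lub hd ?_ ?_
    · refine botIn_of_le ?_ (hma ▸ hba)
      exact inf_le_inf inf_le_left le_rfl
    · refine botIn_of_le ?_ (hmb ▸ hbb)
      exact inf_le_inf inf_le_right le_rfl
  · constructor
    · rintro v (rfl | rfl); exacts [le_top, le_top]
    · intro V hV
      have hV1 : a ⊓ b ≤ V := hV (Set.mem_insert _ _)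
      have hVs : s ≤ V := hV (Set.mem_insert_of_mem _ rfl)
      have hVa' : a' ≤ V := le_trans (hs.1 (Set.mem_insert _ _)) hVs
      have hVb' : b' ≤ V := le_trans (hs.1 (Set.mem_insert_of_mem _ rfl)) hVs
      have haV : a ≤ V := by
        have hd := isLUB_inf_of_isLUB a hlb
        rw [inf_top_eq] at hd
        refine hd.2 ?_
        rintro v (rfl | rfl)
        · exact hV1
        · exact le_trans inf_le_right hVb'
      refine hla.2 ?_
      rintro v (rfl | rfl); exacts [haV, hVa']

lemma le_compl_of_inf_bot {X : C} {a a' c : Subobject X} (hla : IsLUB {a, a'} ⊤)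
    (hbot : IsBotIn (c ⊓ a)) : c ≤ a' := by
  have hd := isLUB_inf_of_isLUB c hla
  rw [inf_top_eq] at hd
  refine hd.2 ?_
  rintro v (rfl | rfl)
  · exact hbot a'
  · exact inf_le_right

end Boolean
section Transport

/-- Order-theoretic complementedness (matching `IsComplementedSub` but in any poset). -/
def GCompl {α : Type*} [Preorder α] (a : α) : Prop :=
  ∃ t m M, IsGLB {a, t} m ∧ (∀ u, m ≤ u) ∧ IsLUB {a, t} M ∧ (∀ u, u ≤ M)

lemma gcompl_iff {X : C} {S : Subobject X} : GCompl S ↔ IsComplementedSub S := by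
  constructor
  · rintro ⟨t, m, M, h1, h2, h3, h4⟩
    have hM : M = ⊤ := le_antisymm le_top (h4 ⊤)
    exact ⟨t, m, h1, h2, hM ▸ h3⟩
  · rintro ⟨t, m, h1, h2, h3⟩
    exact ⟨t, m, ⊤, h1, h2, h3, fun _ => le_top⟩

lemma gcompl_map {α β : Type*} [PartialOrder α] [PartialOrder β] (e : α ≃o β) {a : α}
    (h : GCompl a) : GCompl (e a) := by
  obtain ⟨t, m, M, h1, h2, h3, h4⟩ := h
  refine ⟨e t, e m, e M, ?_, ?_, ?_, ?_⟩
  · rw [show ({e a, e t} : Set β) = e '' {a, t} by rw [Set.image_pair]]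
    exact e.isGLB_image'.mpr h1
  · intro u; rw [← e.apply_symm_apply u]; exact e.monotone (h2 _)
  · rw [show ({e a, e t} : Set β) = e '' {a, t} by rw [Set.image_pair]]
    exact e.isLUB_image'.mpr h3
  · intro u; rw [← e.apply_symm_apply u]; exact e.monotone (h4 _)

end Transport

section Filters
variable [HasFiniteLimits C] [CoherentJoins C] {X0 : C}

lemma cf_top_mem (F : CenterFilter X0) : (⊤ : Subobject X0) ∈ F.carrier := by
  obtain ⟨S, hS⟩ := F.nonempty
  exact F.mem_of_le S hS ⊤ compl_top le_top

/-- The principal filter on a complemented subobject. -/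
noncomputable def prinF (x : Subobject X0) (hx : IsComplementedSub x) : CenterFilter X0 where
  carrier := {y | IsComplementedSub y ∧ x ≤ y}
  mem_complemented := fun _ hS => hS.1
  nonempty := ⟨⊤, compl_top, le_top⟩
  inf_mem := fun S hS T hT m hm => by
    have hm' : m = S ⊓ T := hm.unique isGLB_pair
    exact hm' ▸ ⟨compl_inf hS.1 hT.1, le_inf hS.2 hT.2⟩
  mem_of_le := fun S hS T hT hle => ⟨hT, le_trans hS.2 hle⟩

lemma mem_prinF {x : Subobject X0} (hx : IsComplementedSub x) {y : Subobject X0} :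
    y ∈ (prinF x hx).carrier ↔ IsComplementedSub y ∧ x ≤ y := Iff.rfl

/-- The improper filter: all complemented subobjects. -/
noncomputable def botF : CenterFilter X0 where
  carrier := {y | IsComplementedSub y}
  mem_complemented := fun _ hS => hS
  nonempty := ⟨⊤, compl_top⟩
  inf_mem := fun S hS T hT m hm => by
    have hm' : m = S ⊓ T := hm.unique isGLB_pair
    exact hm' ▸ compl_inf hS hT
  mem_of_le := fun _ _ _ hT _ => hT

lemma cf_bot_of_bot_mem {b : Subobject X0} (hb : IsBotIn b) {F : CenterFilter X0}
    (h : b ∈ F.carrier) : ∀ G : CenterFilter X0, F ≤ G :=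
  fun G _ hx => F.mem_of_le b h _ (G.mem_complemented _ hx) (hb _)

/-- Finite meet of a list of subobjects. -/
noncomputable def linf (l : List (Subobject X0)) : Subobject X0 := l.foldr (· ⊓ ·) ⊤

lemma linf_le_of_mem {l : List (Subobject X0)} {y : Subobject X0} (h : y ∈ l) :
    linf l ≤ y := by
  induction l with
  | nil => cases h
  | cons a t ih =>
    rcases List.mem_cons.mp h with rfl | h
    · exact inf_le_left
    · exact le_trans inf_le_right (ih h)

lemma le_linf {l : List (Subobject X0)} {c : Subobject X0} (h : ∀ y ∈ l, c ≤ y) :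
    c ≤ linf l := by
  induction l with
  | nil => exact le_top
  | cons a t ih =>
    exact le_inf (h a (List.mem_cons_self)) (ih fun y hy => h y (List.mem_cons_of_mem _ hy))

lemma linf_mem (F : CenterFilter X0) {l : List (Subobject X0)}
    (h : ∀ y ∈ l, y ∈ F.carrier) : linf l ∈ F.carrier := by
  induction l with
  | nil => exact cf_top_mem F
  | cons a t ih =>
    exact F.inf_mem a (h a (List.mem_cons_self))
      (linf t) (ih fun y hy => h y (List.mem_cons_of_mem _ hy)) _ isGLB_pair

/-- The filter generated by a family of filters. -/
noncomputable def genF (𝔉 : Set (CenterFilter X0)) : CenterFilter X0 where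
  carrier := {x | IsComplementedSub x ∧
    ∃ l : List (Subobject X0), (∀ y ∈ l, ∃ F ∈ 𝔉, y ∈ F.carrier) ∧ linf l ≤ x}
  mem_complemented := fun _ hS => hS.1
  nonempty := ⟨⊤, compl_top, [], by simp, le_top⟩
  inf_mem := fun S hS T hT m hm => by
    have hm' : m = S ⊓ T := hm.unique isGLB_pair
    obtain ⟨hcS, lS, hlS, hleS⟩ := hS
    obtain ⟨hcT, lT, hlT, hleT⟩ := hT
    subst hm'
    refine ⟨compl_inf hcS hcT, lS ++ lT, ?_, ?_⟩
    · intro y hy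
      rcases List.mem_append.mp hy with h | h
      exacts [hlS y h, hlT y h]
    · refine le_inf (le_trans ?_ hleS) (le_trans ?_ hleT) <;>
        exact le_linf fun y hy => linf_le_of_mem (by
          simp only [List.mem_append]
          first | exact Or.inl hy | exact Or.inr hy)
  mem_of_le := fun S hS T hT hle => by
    obtain ⟨_, l, hl, hleS⟩ := hS
    exact ⟨hT, l, hl, le_trans hleS hle⟩

lemma genF_isGLB (𝔉 : Set (CenterFilter X0)) : IsGLB 𝔉 (genF 𝔉) := by
  constructor
  · intro F hF y hy
    exact ⟨F.mem_complemented y hy, [y], fun z hz => ⟨F, hF, by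
      rcases List.mem_singleton.mp hz with rfl; exact hy⟩,
      le_trans inf_le_left le_rfl⟩
  · intro H hH x hx
    obtain ⟨hcx, l, hl, hle⟩ := hx
    have hmem : ∀ y ∈ l, y ∈ H.carrier := by
      intro y hy
      obtain ⟨F, hF, hyF⟩ := hl y hy
      exact hH hF hyF
    exact H.mem_of_le (linf l) (linf_mem H hmem) x hcx hle

lemma two_filter_split (F G : CenterFilter X0) (l : List (Subobject X0))
    (hl : ∀ y ∈ l, y ∈ F.carrier ∨ y ∈ G.carrier) :
    ∃ a ∈ F.carrier, ∃ b ∈ G.carrier, a ⊓ b ≤ linf l := by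
  induction l with
  | nil => exact ⟨⊤, cf_top_mem F, ⊤, cf_top_mem G, le_top⟩
  | cons y t ih =>
    obtain ⟨a, ha, b, hb, hab⟩ := ih fun z hz => hl z (List.mem_cons_of_mem _ hz)
    rcases hl y (List.mem_cons_self) with h | h
    · refine ⟨y ⊓ a, F.inf_mem y h a ha _ isGLB_pair, b, hb, ?_⟩
      calc (y ⊓ a) ⊓ b ≤ y ⊓ (a ⊓ b) := by rw [inf_assoc]
      _ ≤ y ⊓ linf t := inf_le_inf le_rfl hab
    · refine ⟨a, ha, y ⊓ b, G.inf_mem y h b hb _ isGLB_pair, ?_⟩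
      calc a ⊓ (y ⊓ b) ≤ y ⊓ (a ⊓ b) := by
            rw [← inf_assoc, inf_comm a y, inf_assoc]
      _ ≤ y ⊓ linf t := inf_le_inf le_rfl hab

end Filters
section FiltralObj
variable [HasFiniteLimits C] [CoherentJoins C] {X0 : C}

lemma glb_exists_of_filtral (e : Subobject X0 ≃o CenterFilter X0) (s : Set (Subobject X0)) : ∃ m, IsGLB s m :=
  ⟨e.symm (genF (e '' s)), (e.isGLB_image).mp (genF_isGLB (e '' s))⟩

lemma isBotIn_of_cf (e : Subobject X0 ≃o CenterFilter X0) (A : Subobject X0) (h : ∀ G : CenterFilter X0, e A ≤ G) : IsBotIn A :=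
  fun S => e.le_iff_le.mp (h (e S))

lemma bot_mem_of_isBotIn (e : Subobject X0 ≃o CenterFilter X0) {A : Subobject X0} (h : IsBotIn A) {b : Subobject X0}
    (hb : IsComplementedSub b) : b ∈ (e A).carrier := by
  have h1 : e A ≤ botF := by
    rw [← e.apply_symm_apply (botF : CenterFilter X0)]
    exact e.monotone (h _)
  exact h1 hb

lemma mem_eA_iff (e : Subobject X0 ≃o CenterFilter X0) {A x : Subobject X0} (hx : IsComplementedSub x) :
    x ∈ (e A).carrier ↔ A ≤ e.symm (prinF x hx) := by
  have h1 : A ≤ e.symm (prinF x hx) ↔ e A ≤ prinF x hx := by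
    constructor
    · intro h
      have := e.monotone h
      rwa [e.apply_symm_apply] at this
    · intro h
      have := e.symm.monotone h
      rwa [e.symm_apply_apply] at this
  rw [h1]
  constructor
  · intro hmem y hy
    exact (e A).mem_of_le x hmem y hy.1 hy.2
  · intro h
    exact h ⟨hx, le_rfl⟩

lemma compl_symm {x x' m : Subobject X0} (hg : IsGLB {x, x'} m) (hb : IsBotIn m)
    (hl : IsLUB {x, x'} ⊤) : IsComplementedSub x' :=
  ⟨x, m, by rwa [Set.pair_comm x' x], hb, by rwa [Set.pair_comm x' x]⟩

lemma gcompl_prinF {x : Subobject X0} (hx : IsComplementedSub x) :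
    GCompl (prinF x hx) := by
  obtain ⟨x', m, hg, hbm, hl⟩ := id hx
  have hx' : IsComplementedSub x' := compl_symm hg hbm hl
  have hbot : IsBotIn (x ⊓ x') := (hg.unique isGLB_pair) ▸ hbm
  refine ⟨prinF x' hx', botF, prinF ⊤ compl_top, ⟨?_, ?_⟩, ?_, ⟨?_, ?_⟩, ?_⟩
  · rintro v (rfl | rfl) <;> exact fun y hy => hy.1
  · intro H hH
    have h1 : x ∈ H.carrier := hH (Set.mem_insert _ _) ⟨hx, le_rfl⟩
    have h2 : x' ∈ H.carrier := hH (Set.mem_insert_of_mem _ rfl) ⟨hx', le_rfl⟩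
    have h3 : x ⊓ x' ∈ H.carrier := H.inf_mem x h1 x' h2 _ isGLB_pair
    intro y hy
    exact H.mem_of_le _ h3 y hy (hbot y)
  · intro u y hy
    exact u.mem_complemented y hy
  · rintro v (rfl | rfl) <;> exact fun y hy => ⟨hy.1, le_trans le_top hy.2⟩
  · intro V hV
    intro z hz
    have hz1 : x ≤ z := (hV (Set.mem_insert _ _) hz).2
    have hz2 : x' ≤ z := (hV (Set.mem_insert_of_mem _ rfl) hz).2
    refine ⟨V.mem_complemented z hz, hl.2 ?_⟩
    rintro v (rfl | rfl); exacts [hz1, hz2]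
  · intro u y hy
    exact u.mem_of_le ⊤ (cf_top_mem u) y hy.1 hy.2

/-- Separation by complemented subobjects in a filtral object. -/
lemma filtral_sep (e : Subobject X0 ≃o CenterFilter X0) {A B : Subobject X0} (hb : IsBotIn (A ⊓ B)) :
    ∃ P Q : Subobject X0, IsComplementedSub P ∧ IsComplementedSub Q ∧
      A ≤ P ∧ B ≤ Q ∧ IsBotIn (P ⊓ Q) := by
  obtain ⟨b₀, hb₀⟩ := CoherentJoins.exists_bot X0
  have hcb₀ : IsComplementedSub b₀ := compl_of_bot hb₀
  have hglb2 : IsGLB {e A, e B} (e (A ⊓ B)) := by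
    rw [show ({e A, e B} : Set (CenterFilter X0)) = e '' {A, B} by rw [Set.image_pair]]
    exact e.isGLB_image'.mpr isGLB_pair
  have heq : e (A ⊓ B) = genF {e A, e B} := hglb2.unique (genF_isGLB _)
  have hmem : b₀ ∈ (genF {e A, e B}).carrier := heq ▸ bot_mem_of_isBotIn e hb hcb₀
  obtain ⟨_, l, hl, hle⟩ := hmem
  have hl' : ∀ y ∈ l, y ∈ (e A).carrier ∨ y ∈ (e B).carrier := by
    intro y hy
    obtain ⟨F, hF, hyF⟩ := hl y hy
    rcases hF with rfl | hF
    · exact Or.inl hyF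
    · rcases hF with rfl; exact Or.inr hyF
  obtain ⟨a, haF, b, hbF, hab⟩ := two_filter_split (e A) (e B) l hl'
  have hca : IsComplementedSub a := (e A).mem_complemented a haF
  have hcb : IsComplementedSub b := (e B).mem_complemented b hbF
  set P := e.symm (prinF a hca) with hP
  set Q := e.symm (prinF b hcb) with hQ
  have hAP : A ≤ P := (mem_eA_iff e hca).mp haF
  have hBQ : B ≤ Q := (mem_eA_iff e hcb).mp hbF
  have hPc : IsComplementedSub P := by
    rw [← gcompl_iff]
    have := gcompl_map e.symm (gcompl_prinF hca)
    exact this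
  have hQc : IsComplementedSub Q := by
    rw [← gcompl_iff]
    exact gcompl_map e.symm (gcompl_prinF hcb)
  refine ⟨P, Q, hPc, hQc, hAP, hBQ, ?_⟩
  -- show `P ⊓ Q` is a bottom element
  have hglb3 : IsGLB {prinF a hca, prinF b hcb} (e (P ⊓ Q)) := by
    have h1 : IsGLB (e '' {P, Q}) (e (P ⊓ Q)) := e.isGLB_image'.mpr isGLB_pair
    rwa [Set.image_pair, hP, hQ, e.apply_symm_apply, e.apply_symm_apply] at h1
  have heq3 : e (P ⊓ Q) = genF {prinF a hca, prinF b hcb} := hglb3.unique (genF_isGLB _)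
  have hb₀mem : b₀ ∈ (e (P ⊓ Q)).carrier := by
    rw [heq3]
    refine ⟨hcb₀, [a, b], ?_, ?_⟩
    · intro y hy
      rcases List.mem_cons.mp hy with h | hy
      · exact ⟨prinF a hca, Set.mem_insert _ _, by rw [h]; exact ⟨hca, le_rfl⟩⟩
      · have h := List.mem_singleton.mp hy
        exact ⟨prinF b hcb, Set.mem_insert_of_mem _ rfl, by rw [h]; exact ⟨hcb, le_rfl⟩⟩
    · have h5 : linf [a, b] = a ⊓ (b ⊓ ⊤) := rfl
      rw [h5]
      calc a ⊓ (b ⊓ ⊤) ≤ a ⊓ b := inf_le_inf le_rfl inf_le_left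
      _ ≤ linf l := hab
      _ ≤ b₀ := hle
  exact isBotIn_of_cf e _ (cf_bot_of_bot_mem hb₀ hb₀mem)

/-- The glb of a meet-closed family of pointed subobjects of a filtral object
is not a bottom element. -/
lemma glb_not_bot (e : Subobject X0 ≃o CenterFilter X0) (hnt : NonTrivialCat C)
    {s : Set (Subobject X0)} (hne : s.Nonempty) (hdir : ∀ a ∈ s, ∀ b ∈ s, a ⊓ b ∈ s)
    (hpts : ∀ a ∈ s, ∃ p : ⊤_ C ⟶ X0, a.Factors p) {m : Subobject X0}
    (hm : IsGLB s m) : ¬ IsBotIn m := by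
  intro hbot
  obtain ⟨b₀, hb₀⟩ := CoherentJoins.exists_bot X0
  have hcb₀ : IsComplementedSub b₀ := compl_of_bot hb₀
  have heq : e m = genF (e '' s) := (e.isGLB_image'.mpr hm).unique (genF_isGLB _)
  have hmem : b₀ ∈ (genF (e '' s)).carrier := heq ▸ bot_mem_of_isBotIn e hbot hcb₀
  obtain ⟨_, l, hl, hle⟩ := hmem
  have hl' : ∀ y ∈ l, ∃ a ∈ s, y ∈ (e a).carrier := by
    intro y hy
    obtain ⟨F, ⟨a, has, rfl⟩, hyF⟩ := hl y hy
    exact ⟨a, has, hyF⟩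
  rcases l with _ | ⟨y0, t⟩
  · obtain ⟨A, hAs⟩ := hne
    have htop : (⊤ : Subobject X0) ≤ b₀ := hle
    have hbotA : IsBotIn A := fun T => le_trans (le_trans le_top htop) (hb₀ T)
    obtain ⟨p, hp⟩ := hpts A hAs
    exact no_point_through_bot hnt hbotA hp
  · -- find a single member of `s` whose filter contains all entries of the list
    have key : ∀ (t : List (Subobject X0)) (y0 : Subobject X0),
        (∀ y ∈ y0 :: t, ∃ a ∈ s, y ∈ (e a).carrier) →
        ∃ A ∈ s, ∀ y ∈ y0 :: t, y ∈ (e A).carrier := by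
      intro t
      induction t with
      | nil =>
        intro y0 h
        obtain ⟨a, has, hy⟩ := h y0 (List.mem_cons_self)
        refine ⟨a, has, ?_⟩
        intro y hy'
        rcases List.mem_singleton.mp hy' with rfl
        exact hy
      | cons z t ih =>
        intro y0 h
        obtain ⟨A', hA's, hall⟩ := ih z (fun y hy => h y (List.mem_cons_of_mem _ hy))
        obtain ⟨a, has, hy0⟩ := h y0 (List.mem_cons_self)
        refine ⟨a ⊓ A', hdir a has A' hA's, ?_⟩
        have hsub1 : (e a).carrier ⊆ (e (a ⊓ A')).carrier :=
          e.monotone (inf_le_left : a ⊓ A' ≤ a)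
        have hsub2 : (e A').carrier ⊆ (e (a ⊓ A')).carrier :=
          e.monotone (inf_le_right : a ⊓ A' ≤ A')
        intro y hy
        rcases List.mem_cons.mp hy with rfl | hy
        · exact hsub1 hy0
        · exact hsub2 (hall y hy)
    obtain ⟨A, hAs, hall⟩ := key t y0 hl'
    have h1 : linf (y0 :: t) ∈ (e A).carrier := linf_mem _ hall
    have h2 : b₀ ∈ (e A).carrier := (e A).mem_of_le _ h1 b₀ hcb₀ hle
    have h3 : IsBotIn A := isBotIn_of_cf e A (cf_bot_of_bot_mem hb₀ h2)
    obtain ⟨p, hp⟩ := hpts A hAs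
    exact no_point_through_bot hnt h3 hp

end FiltralObj
section Images
variable [HasFiniteLimits C] [HasImages C]

lemma image_le_iff {A X : C} (f : A ⟶ X) (T : Subobject X) :
    imageSubobject f ≤ T ↔ T.Factors f := by
  constructor
  · intro h
    refine Subobject.factors_of_le _ h ?_
    exact (Subobject.factors_iff _ _).mpr ⟨factorThruImageSubobject f, imageSubobject_arrow_comp f⟩
  · intro h
    exact imageSubobject_le f (T.factorThru f h) (T.factorThru_arrow f h)

lemma eq_top_of_factors_id {X : C} {S : Subobject X} (h : S.Factors (𝟙 X)) : S = ⊤ := by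
  refine le_antisymm le_top (le_iff_factors_arrow.mpr ?_)
  have := Subobject.factors_of_factors_right ((⊤ : Subobject X).arrow) h
  rwa [Category.comp_id] at this

lemma image_top_of_strongEpi {Y Z : C} (f : Y ⟶ Z) [StrongEpi f] :
    imageSubobject f = ⊤ := by
  have sq : CommSq (factorThruImageSubobject f) f ((imageSubobject f).arrow) (𝟙 Z) :=
    ⟨by simp [imageSubobject_arrow_comp]⟩
  exact eq_top_of_factors_id ((Subobject.factors_iff _ _).mpr ⟨sq.lift, sq.fac_right⟩)

lemma mk_le_image_of_image_top {P A X : C} (k : P ⟶ A) (hk : imageSubobject k = ⊤)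
    (m : A ⟶ X) [Mono m] : Subobject.mk m ≤ imageSubobject (k ≫ m) := by
  set I := imageSubobject (k ≫ m) with hI
  have hw : factorThruImageSubobject (k ≫ m) ≫ I.arrow = k ≫ m := imageSubobject_arrow_comp _
  have hlift : pullback.lift (factorThruImageSubobject (k ≫ m)) k hw ≫
      pullback.snd I.arrow m = k := pullback.lift_snd _ _ _
  have h1 : imageSubobject k ≤ Subobject.mk (pullback.snd I.arrow m) :=
    imageSubobject_le_mk _ k _ hlift
  rw [hk] at h1
  have h2 : (Subobject.mk (pullback.snd I.arrow m)).Factors (𝟙 A) :=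
    Subobject.factors_of_le _ h1 (Subobject.top_factors _)
  obtain ⟨s, hs⟩ := (mk_factors_iff_exists _ _).mp h2
  refine Subobject.mk_le_of_comm (s ≫ pullback.fst I.arrow m) ?_
  rw [Category.assoc, pullback.condition, ← Category.assoc, hs, Category.id_comp]

variable [CoherentJoins C] [StableImages C]

lemma point_lift (hnt : NonTrivialCat C) (hpt : EnoughPoints C) {Y Z : C} (f : Y ⟶ Z)
    (hf : imageSubobject f = ⊤) (z : ⊤_ C ⟶ Z) : ∃ y : ⊤_ C ⟶ Y, y ≫ f = z := by
  have himg := StableImages.image_pullback f z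
  rw [hf, Subobject.pullback_top] at himg
  by_cases hP : NonInitial (pullback f z)
  · obtain ⟨se⟩ := hpt _ hP
    refine ⟨se.section_ ≫ pullback.fst f z, ?_⟩
    rw [Category.assoc, pullback.condition, ← Category.assoc,
      to1_eq (se.section_ ≫ pullback.snd f z) (𝟙 _), Category.id_comp]
  · exfalso
    have hini : Nonempty (IsInitial (pullback f z)) := by
      by_contra hne
      exact hP (fun i => hne ⟨i⟩)
    apply false_of_top_bot hnt
    intro S
    rw [himg]
    exact imageSubobject_le _ (hini.some.to (S : C)) (to1_eq _ _)

lemma image_factorThru_top {Y Z : C} (g : Y ⟶ Z) :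
    imageSubobject (factorThruImageSubobject g) = ⊤ := by
  set e0 := factorThruImageSubobject g with he0
  set ι2 := (imageSubobject e0).arrow with hι2
  have h1 : imageSubobject g ≤ Subobject.mk (ι2 ≫ (imageSubobject g).arrow) := by
    refine imageSubobject_le_mk _ g (factorThruImageSubobject e0) ?_
    rw [← Category.assoc, imageSubobject_arrow_comp, imageSubobject_arrow_comp]
  obtain ⟨k, hk⟩ := (mk_factors_iff_exists _ _).mp (le_iff_factors_arrow.mp h1)
  have hk2 : (k ≫ ι2) ≫ (imageSubobject g).arrow = 𝟙 _ ≫ (imageSubobject g).arrow := by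
    rw [Category.assoc, hk, Category.id_comp]
  have hk3 : k ≫ ι2 = 𝟙 _ := (cancel_mono _).mp hk2
  exact eq_top_of_factors_id ((Subobject.factors_iff _ _).mpr ⟨k, hk3⟩)

lemma point_lift_image (hnt : NonTrivialCat C) (hpt : EnoughPoints C) {Y Z : C} (g : Y ⟶ Z)
    (z : ⊤_ C ⟶ Z) (hz : (imageSubobject g).Factors z) : ∃ y : ⊤_ C ⟶ Y, y ≫ g = z := by
  obtain ⟨y, hy⟩ := point_lift hnt hpt (factorThruImageSubobject g) (image_factorThru_top g)
    ((imageSubobject g).factorThru z hz)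
  refine ⟨y, ?_⟩
  rw [← imageSubobject_arrow_comp g, ← Category.assoc, hy, Subobject.factorThru_arrow]

end Images

section Push
variable [HasFiniteLimits C] [HasImages C]

/-- Direct image along `q`. -/
noncomputable def pushImg {Y Z : C} (q : Y ⟶ Z) (S : Subobject Y) : Subobject Z :=
  imageSubobject (S.arrow ≫ q)

lemma push_le_iff {Y Z : C} (q : Y ⟶ Z) (S : Subobject Y) (T : Subobject Z) :
    pushImg q S ≤ T ↔ T.Factors (S.arrow ≫ q) := image_le_iff _ _

lemma gc_push {Y Z : C} (q : Y ⟶ Z) :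
    GaloisConnection (pushImg q) ((Subobject.pullback q).obj) := by
  intro S T
  rw [push_le_iff]
  rw [show T.Factors (S.arrow ≫ q) ↔ ((Subobject.pullback q).obj T).Factors S.arrow from
    (factors_pullback_iff q T S.arrow).symm]
  exact le_iff_factors_arrow.symm

lemma factors_push {Y Z : C} (q : Y ⟶ Z) (S : Subobject Y) {W : C} (u : W ⟶ Y)
    (hu : S.Factors u) : (pushImg q S).Factors (u ≫ q) := by
  have h1 : (pushImg q S).Factors (S.arrow ≫ q) :=
    (Subobject.factors_iff _ _).mpr ⟨factorThruImageSubobject _, imageSubobject_arrow_comp _⟩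
  have h2 := Subobject.factors_of_factors_right (S.factorThru u hu) h1
  rwa [← Category.assoc, Subobject.factorThru_arrow] at h2

variable [StableImages C]

lemma push_pull_eq {Y Z : C} (q : Y ⟶ Z) (hq : imageSubobject q = ⊤) (T : Subobject Z) :
    pushImg q ((Subobject.pullback q).obj T) = T := by
  refine le_antisymm ((gc_push q).l_u_le T) ?_
  have himgk : imageSubobject (pullback.snd q T.arrow) = ⊤ := by
    have h := StableImages.image_pullback q T.arrow
    rw [hq, Subobject.pullback_top] at h
    exact h.symm
  have h1 : Subobject.mk T.arrow ≤ imageSubobject (pullback.snd q T.arrow ≫ T.arrow) :=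
    mk_le_image_of_image_top _ himgk T.arrow
  rw [Subobject.mk_arrow] at h1
  have hfacfst : ((Subobject.pullback q).obj T).Factors (pullback.fst q T.arrow) :=
    (factors_pullback_iff q T _).mpr
      ((Subobject.factors_iff _ _).mpr ⟨pullback.snd q T.arrow, pullback.condition.symm⟩)
  have hw := ((Subobject.pullback q).obj T).factorThru_arrow _ hfacfst
  have h2 : imageSubobject (pullback.snd q T.arrow ≫ T.arrow) ≤
      pushImg q ((Subobject.pullback q).obj T) := by
    rw [← pullback.condition, ← hw, Category.assoc]
    exact imageSubobject_comp_le _ _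
  exact le_trans h1 h2

lemma monoCompleteAt_of_cover {Y Z : C} (q : Y ⟶ Z) (hq : imageSubobject q = ⊤)
    (hcomp : ∀ s : Set (Subobject Y), ∃ m, IsGLB s m) : MonoCompleteAt Z := by
  intro s
  obtain ⟨m', hm'⟩ := hcomp ((Subobject.pullback q).obj '' s)
  refine ⟨pushImg q m', ?_, ?_⟩
  · intro A hA
    exact (gc_push q).l_le (hm'.1 ⟨A, hA, rfl⟩)
  · intro x hx
    have h1 : (Subobject.pullback q).obj x ≤ m' := by
      refine hm'.2 ?_
      rintro y ⟨A, hA, rfl⟩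
      exact (Subobject.pullback q).monotone (hx hA)
    have h2 := (gc_push q).monotone_l h1
    rwa [push_pull_eq q hq] at h2

end Push
/-- If `𝒳` is filtral then `Spec X` is a compact Hausdorff space for every `X`. -/
theorem spec_compactHausdorff
    [WellPowered.{v} C] [HasFiniteLimits C] [HasImages C] [StableImages C] [CoherentJoins C]
    (hnt : NonTrivialCat C) (hwp : WellPointed C) (hpt : EnoughPoints C)
    (hf : Filtral C) (X : C) :
    ∃ t : TopologicalSpace (⊤_ C ⟶ X),
      (∀ T : Set (⊤_ C ⟶ X), @IsClosed _ t T ↔ cl T = T) ∧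
      @CompactSpace _ t ∧ @T2Space _ t := by
  classical
  obtain ⟨X0, qc, ⟨hre⟩, hfo⟩ := hf X
  obtain ⟨e⟩ := hfo
  haveI : RegularEpi qc := hre
  haveI : StrongEpi qc := by haveI := hre.effectiveEpi; infer_instance
  have hqtop : imageSubobject qc = ⊤ := image_top_of_strongEpi qc
  have hcomp0 : ∀ s : Set (Subobject X0), ∃ m, IsGLB s m := glb_exists_of_filtral e
  have mc : MonoCompleteAt X := monoCompleteAt_of_cover qc hqtop hcomp0
  -- basic facts about `Cg` and `Vs`
  have hCg : ∀ T : Set (⊤_ C ⟶ X), IsGLB {S : Subobject X | ∀ p ∈ T, S.Factors p} (Cg T) := by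
    intro T
    rw [Cg, dif_pos (mc _)]
    exact Exists.choose_spec _
  have hCgfac : ∀ (T : Set (⊤_ C ⟶ X)) (p : ⊤_ C ⟶ X), p ∈ T → (Cg T).Factors p := by
    intro T p hp
    rw [factors_point_iff_le]
    exact (hCg T).2 (fun S hS => factors_point_iff_le.mp (hS p hp))
  have hsubcl : ∀ T : Set (⊤_ C ⟶ X), T ⊆ cl T := fun T p hp => hCgfac T p hp
  have hCgle : ∀ (T : Set (⊤_ C ⟶ X)) (S : Subobject X),
      (∀ p ∈ T, S.Factors p) → Cg T ≤ S := fun T S hS => (hCg T).1 hS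
  have hVs_mono : ∀ {S S' : Subobject X}, S ≤ S' → Vs S ⊆ Vs S' := fun h p hp =>
    Subobject.factors_of_le _ h hp
  have hVsCg : ∀ S : Subobject X, cl (Vs S) = Vs S := by
    intro S
    apply Set.Subset.antisymm
    · exact hVs_mono (hCgle (Vs S) S (fun p hp => hp))
    · exact hsubcl _
  set 𝒞 : Set (Set (⊤_ C ⟶ X)) := {T | cl T = T} with h𝒞
  have hVsmem : ∀ S : Subobject X, Vs S ∈ 𝒞 := hVsCg
  have hempty : (∅ : Set (⊤_ C ⟶ X)) ∈ 𝒞 := by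
    apply Set.eq_empty_iff_forall_notMem.mpr
    intro p hp
    have hbot : IsBotIn (Cg (∅ : Set (⊤_ C ⟶ X))) :=
      fun S => hCgle ∅ S (fun q hq => absurd hq (Set.notMem_empty q))
    exact no_point_through_bot hnt hbot hp
  have hsInter : ∀ A : Set (Set (⊤_ C ⟶ X)), A ⊆ 𝒞 → ⋂₀ A ∈ 𝒞 := by
    intro A hA
    apply Set.Subset.antisymm _ (hsubcl _)
    intro p hp
    intro T hT
    have h1 : cl (⋂₀ A) ⊆ cl T := by
      apply hVs_mono
      exact hCgle (⋂₀ A) (Cg T) (fun r hr => hCgfac T r (Set.sInter_subset_of_mem hT hr))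
    have h2 : cl T = T := hA hT
    exact h2 ▸ h1 hp
  have hunion : ∀ A ∈ 𝒞, ∀ B ∈ 𝒞, A ∪ B ∈ 𝒞 := by
    intro T1 h1 T2 h2
    apply Set.Subset.antisymm _ (hsubcl _)
    obtain ⟨U, hU⟩ := CoherentJoins.exists_sup (Cg T1) (Cg T2)
    have hle : Cg (T1 ∪ T2) ≤ U := by
      apply hCgle
      intro p hp
      rcases hp with hp | hp
      · exact Subobject.factors_of_le _ (hU.1 (Set.mem_insert _ _)) (hCgfac T1 p hp)
      · exact Subobject.factors_of_le _ (hU.1 (Set.mem_insert_of_mem _ rfl)) (hCgfac T2 p hp)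
    intro p hp
    have hpU : U.Factors p := Subobject.factors_of_le _ hle hp
    rcases factors_of_factors_lub hnt hpt hU hpU with h | h
    · exact Or.inl (h1 ▸ (h : p ∈ cl T1))
    · exact Or.inr (h2 ▸ (h : p ∈ cl T2))
  letI t : TopologicalSpace (⊤_ C ⟶ X) := TopologicalSpace.ofClosed 𝒞 hempty hsInter hunion
  have hopen : ∀ s : Set (⊤_ C ⟶ X), IsOpen s ↔ sᶜ ∈ 𝒞 := fun s => Iff.rfl
  have hclosed : ∀ T : Set (⊤_ C ⟶ X), IsClosed T ↔ cl T = T := by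
    intro T
    rw [← isOpen_compl_iff, hopen, compl_compl]
    exact Iff.rfl
  -- lifting points along the cover
  have hlift : ∀ p : ⊤_ C ⟶ X, ∃ p0 : ⊤_ C ⟶ X0, p0 ≫ qc = p :=
    fun p => point_lift hnt hpt qc hqtop p
  refine ⟨t, hclosed, ?_, ?_⟩
  · -- compactness
    refine ⟨?_⟩
    apply isCompact_of_finite_subfamily_closed
    intro ι Z hZc hZe
    by_contra hfin
    push_neg at hfin
    have hfin' : ∀ u : Finset ι, (Set.univ ∩ ⋂ i ∈ u, Z i).Nonempty := hfin
    have hZfix : ∀ i, Z i = Vs (Cg (Z i)) := fun i => ((hclosed (Z i)).mp (hZc i)).symm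
    set fam : Set (Subobject X0) :=
      {A | ∃ u : Finset ι, A = (Subobject.pullback qc).obj (u.inf (fun i => Cg (Z i)))}
      with hfam
    have hfam_ne : fam.Nonempty := ⟨_, ∅, rfl⟩
    have hdir : ∀ a ∈ fam, ∀ b ∈ fam, a ⊓ b ∈ fam := by
      rintro a ⟨u, rfl⟩ b ⟨v, rfl⟩
      refine ⟨u ∪ v, ?_⟩
      rw [Finset.inf_union, Subobject.inf_pullback]
    have hpts : ∀ a ∈ fam, ∃ p0 : ⊤_ C ⟶ X0, a.Factors p0 := by
      rintro a ⟨u, rfl⟩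
      obtain ⟨p, hp⟩ := hfin' u
      have hpmem : ∀ i ∈ u, p ∈ Z i := by
        have := hp.2
        rw [Set.mem_iInter₂] at this
        exact this
      have hfac : (u.inf (fun i => Cg (Z i))).Factors p := by
        rw [factors_point_iff_le]
        refine Finset.le_inf ?_
        intro i hi
        have hpZ : p ∈ Vs (Cg (Z i)) := (hZfix i) ▸ hpmem i hi
        exact factors_point_iff_le.mp hpZ
      obtain ⟨p0, hp0⟩ := hlift p
      refine ⟨p0, (factors_pullback_iff qc _ p0).mpr ?_⟩
      rw [hp0]
      exact hfac
    obtain ⟨m, hm⟩ := hcomp0 fam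
    have hnb := glb_not_bot e hnt hfam_ne hdir hpts hm
    obtain ⟨p0, hp0⟩ := nonbot_point hpt hnb
    refine absurd hZe (Set.nonempty_iff_ne_empty.mp ⟨p0 ≫ qc, Set.mem_inter (Set.mem_univ _) ?_⟩)
    rw [Set.mem_iInter]
    intro i
    have h1 : m ≤ (Subobject.pullback qc).obj (({i} : Finset ι).inf (fun i => Cg (Z i))) :=
      hm.1 ⟨{i}, rfl⟩
    have h2 : ({i} : Finset ι).inf (fun i => Cg (Z i)) = Cg (Z i) := Finset.inf_singleton
    have h3 : ((Subobject.pullback qc).obj (Cg (Z i))).Factors p0 :=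
      Subobject.factors_of_le _ (h2 ▸ h1) hp0
    have h4 := (factors_pullback_iff qc _ p0).mp h3
    rw [hZfix i]
    exact h4
  · -- Hausdorff
    constructor
    intro p q hpq
    set A := (Subobject.pullback qc).obj (Subobject.mk p) with hA
    set B := (Subobject.pullback qc).obj (Subobject.mk q) with hB
    have hliftP : ∀ r0 : ⊤_ C ⟶ X0, A.Factors r0 → r0 ≫ qc = p := by
      intro r0 h
      have h1 : (Subobject.mk p).Factors (r0 ≫ qc) := (factors_pullback_iff qc _ r0).mp h
      obtain ⟨w1, hw1⟩ := (mk_factors_iff_exists _ _).mp h1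
      rw [← hw1, to1_eq w1 (𝟙 _), Category.id_comp]
    have hliftQ : ∀ r0 : ⊤_ C ⟶ X0, B.Factors r0 → r0 ≫ qc = q := by
      intro r0 h
      have h1 : (Subobject.mk q).Factors (r0 ≫ qc) := (factors_pullback_iff qc _ r0).mp h
      obtain ⟨w1, hw1⟩ := (mk_factors_iff_exists _ _).mp h1
      rw [← hw1, to1_eq w1 (𝟙 _), Category.id_comp]
    have hAB : IsBotIn (A ⊓ B) := by
      by_contra hnb
      obtain ⟨r0, hr0⟩ := nonbot_point hpt hnb
      have h1 := hliftP r0 (Subobject.factors_of_le _ inf_le_left hr0)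
      have h2 := hliftQ r0 (Subobject.factors_of_le _ inf_le_right hr0)
      exact hpq (by rw [← h1, h2])
    obtain ⟨P, Q, hPc, hQc, hAP, hBQ, hPQ⟩ := filtral_sep e hAB
    obtain ⟨P', mP, hgP, hbP, hlP⟩ := hPc
    have hopenVs : ∀ S : Subobject X, IsOpen (Vs S)ᶜ := by
      intro S
      rw [hopen, compl_compl]
      exact hVsmem S
    refine ⟨(Vs (pushImg qc P'))ᶜ, (Vs (pushImg qc P))ᶜ, hopenVs _, hopenVs _, ?_, ?_, ?_⟩
    · -- p ∉ Vs (pushImg qc P')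
      intro hp
      obtain ⟨y, hy⟩ := point_lift_image hnt hpt (P'.arrow ≫ qc) p hp
      set p1 := y ≫ P'.arrow with hp1
      have hp1qc : p1 ≫ qc = p := by rw [hp1, Category.assoc, hy]
      have hfP' : P'.Factors p1 := (Subobject.factors_iff _ _).mpr ⟨y, rfl⟩
      have hfA : A.Factors p1 := by
        refine (factors_pullback_iff qc _ p1).mpr ?_
        rw [hp1qc]
        exact (mk_factors_iff_exists _ _).mpr ⟨𝟙 _, Category.id_comp p⟩
      have hfP : P.Factors p1 := Subobject.factors_of_le _ hAP hfA
      have hmP : (Subobject.mk p1) ≤ mP := by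
        refine hgP.2 ?_
        rintro v (rfl | rfl)
        · exact factors_point_iff_le.mp hfP
        · exact factors_point_iff_le.mp hfP'
      exact no_point_through_bot hnt hbP (factors_point_iff_le.mpr hmP)
    · -- q ∉ Vs (pushImg qc P)
      intro hq
      obtain ⟨y, hy⟩ := point_lift_image hnt hpt (P.arrow ≫ qc) q hq
      set q1 := y ≫ P.arrow with hq1
      have hq1qc : q1 ≫ qc = q := by rw [hq1, Category.assoc, hy]
      have hfP : P.Factors q1 := (Subobject.factors_iff _ _).mpr ⟨y, rfl⟩
      have hfB : B.Factors q1 := by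
        refine (factors_pullback_iff qc _ q1).mpr ?_
        rw [hq1qc]
        exact (mk_factors_iff_exists _ _).mpr ⟨𝟙 _, Category.id_comp q⟩
      have hfQ : Q.Factors q1 := Subobject.factors_of_le _ hBQ hfB
      have hle : (Subobject.mk q1) ≤ P ⊓ Q :=
        le_inf (factors_point_iff_le.mp hfP) (factors_point_iff_le.mp hfQ)
      exact no_point_through_bot hnt hPQ (factors_point_iff_le.mpr hle)
    · -- disjoint
      rw [Set.disjoint_left]
      intro r hr1 hr2
      obtain ⟨r0, hr0⟩ := hlift r
      have hrtop : (⊤ : Subobject X0).Factors r0 := Subobject.top_factors _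
      rcases factors_of_factors_lub hnt hpt hlP hrtop with h | h
      · -- r0 factors P, so r ∈ Vs (pushImg qc P)
        apply hr2
        have := factors_push qc P r0 h
        rwa [hr0] at this
      · apply hr1
        have := factors_push qc P' r0 h
        rwa [hr0] at this

end Paper
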